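/- Let m > 0, ε = m²/64 and ρ₀ = 1/(4m). Let k : (0,∞) → ℝ be a continuous function with k(τ) ≤ 0 for all τ, k(ρ) = -(ρ/4)·(1 + ρ²/4)^{-3/2} for ρ ≤ ρ₀, and k(ρ) = -(m/(2√ε))·ρ^{-2} for ρ ≥ 2ρ₀. Set b₀ = √ε + m/(4·√ε·ρ₀) - ∫_{0}^{2ρ₀} k(τ) dτ and define u_m(ρ) = b₀ + ∫_{0}^{ρ} k(τ) dτ for ρ > 0. Then u_m(ρ) > 0 for every ρ > 0, and u_m(ρ) = √ε·(1 + m/(2ερ)) for every ρ ≥ 2ρ₀. -/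

import Mathlib

/-- The conformal factor `u_m` from the proof of Proposition 1.1 (equations (1.11)–(1.14)):
with `ε = m²/64`, `ρ₀ = 1/(4m)`, a continuous nonpositive gluing function `k` equal to
`-(ρ/4)(1 + ρ²/4)^{-3/2}` for `ρ ≤ ρ₀` and to `-(m/(2√ε))ρ⁻²` for `ρ ≥ 2ρ₀`, and
`b₀ = √ε + m/(4√ε ρ₀) - ∫₀^{2ρ₀} k`, the function `u_m(ρ) = b₀ + ∫₀^ρ k` is positive on
`(0,∞)` and equals `√ε (1 + m/(2ερ))` for `ρ ≥ 2ρ₀`. -/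
theorem glued_conformal_factor
    (m ε ρ₀ : ℝ) (hm : 0 < m) (hε : ε = m ^ 2 / 64) (hρ₀ : ρ₀ = 1 / (4 * m))
    (k : ℝ → ℝ)
    (hcont : ContinuousOn k (Set.Ioi (0 : ℝ)))
    (hnonpos : ∀ τ : ℝ, k τ ≤ 0)
    (hk0 : ∀ ρ : ℝ, 0 < ρ → ρ ≤ ρ₀ → k ρ = -(ρ / 4) * (1 + ρ ^ 2 / 4) ^ (-(3 : ℝ) / 2))
    (hk1 : ∀ ρ : ℝ, 2 * ρ₀ ≤ ρ → k ρ = -(m / (2 * Real.sqrt ε)) * ρ⁻¹ ^ 2)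
    (b₀ : ℝ)
    (hb₀ : b₀ = Real.sqrt ε + m / (4 * Real.sqrt ε * ρ₀) - ∫ τ in (0 : ℝ)..(2 * ρ₀), k τ)
    (u : ℝ → ℝ)
    (hu : ∀ ρ : ℝ, 0 < ρ → u ρ = b₀ + ∫ τ in (0 : ℝ)..ρ, k τ) :
    (∀ ρ : ℝ, 0 < ρ → 0 < u ρ) ∧
    (∀ ρ : ℝ, 2 * ρ₀ ≤ ρ → u ρ = Real.sqrt ε * (1 + m / (2 * ε * ρ))) := by
  have hρ₀pos : 0 < ρ₀ := by rw [hρ₀]; positivity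
  have hsq : Real.sqrt ε = m / 8 := by
    rw [hε, show m ^ 2 / 64 = (m / 8) ^ 2 by ring, Real.sqrt_sq (by positivity)]
  have hεpos : 0 < ε := by rw [hε]; positivity
  -- integrability of k on positive intervals
  have hintpos : ∀ a b : ℝ, 0 < a → 0 < b → IntervalIntegrable k MeasureTheory.volume a b := by
    intro a b ha hb
    apply (hcont.mono ?_).intervalIntegrable
    intro x hx
    have := hx.1
    simp only [Set.mem_Ioi]
    calc (0:ℝ) < min a b := lt_min ha hb
    _ ≤ x := hx.1
  have hgcont : Continuous (fun τ : ℝ => -(τ / 4) * (1 + τ ^ 2 / 4) ^ (-(3 : ℝ) / 2)) := by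
    apply Continuous.mul (by continuity)
    exact Continuous.rpow_const (by continuity) (fun x => Or.inl (by positivity))
  have hint0 : IntervalIntegrable k MeasureTheory.volume 0 ρ₀ := by
    have hg : IntervalIntegrable _ MeasureTheory.volume (0:ℝ) ρ₀ := hgcont.intervalIntegrable (0:ℝ) ρ₀
    apply hg.congr
    rw [Set.uIoc_of_le hρ₀pos.le]
    exact fun x hx => (hk0 x hx.1 hx.2).symm
  have hintk : ∀ ρ : ℝ, 0 < ρ → IntervalIntegrable k MeasureTheory.volume 0 ρ := by
    intro ρ hρ
    rcases le_or_gt ρ ρ₀ with h | h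
    · exact hint0.mono_set (by
        rw [Set.uIcc_of_le hρ.le, Set.uIcc_of_le hρ₀pos.le]
        exact Set.Icc_subset_Icc le_rfl h)
    · exact hint0.trans (hintpos ρ₀ ρ hρ₀pos hρ)
  have hC : b₀ + (∫ τ in (0 : ℝ)..(2 * ρ₀), k τ)
      = Real.sqrt ε + m / (4 * Real.sqrt ε * ρ₀) := by rw [hb₀]; ring
  -- the formula for ρ ≥ 2ρ₀
  have hform : ∀ ρ : ℝ, 2 * ρ₀ ≤ ρ → u ρ = Real.sqrt ε * (1 + m / (2 * ε * ρ)) := by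
    intro ρ hρ
    have h2ρ₀ : (0:ℝ) < 2 * ρ₀ := by positivity
    have hρpos : 0 < ρ := lt_of_lt_of_le h2ρ₀ hρ
    have hsplit : (∫ τ in (0 : ℝ)..(2 * ρ₀), k τ) + (∫ τ in (2 * ρ₀)..ρ, k τ)
        = ∫ τ in (0 : ℝ)..ρ, k τ :=
      intervalIntegral.integral_add_adjacent_intervals (hintk _ h2ρ₀)
        (hintpos _ _ h2ρ₀ hρpos)
    have htail : (∫ τ in (2 * ρ₀)..ρ, k τ)
        = -(m / (2 * Real.sqrt ε)) * ((ρ ^ (-1 : ℤ) - (2 * ρ₀) ^ (-1 : ℤ)) / (-1)) := by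
      rw [show (∫ τ in (2 * ρ₀)..ρ, k τ)
          = ∫ τ in (2 * ρ₀)..ρ, -(m / (2 * Real.sqrt ε)) * τ ^ (-2 : ℤ) from ?_]
      · rw [intervalIntegral.integral_const_mul, integral_zpow]
        · norm_num
        · right
          constructor
          · decide
          · rw [Set.uIcc_of_le hρ]
            intro hmem
            exact absurd hmem.1 (by linarith)
      · apply intervalIntegral.integral_congr
        intro x hx
        rw [Set.uIcc_of_le hρ] at hx
        rw [hk1 x hx.1]
        norm_num [zpow_neg, inv_pow]
    have hu' := hu ρ hρpos
    rw [hu', ← hsplit, ← add_assoc, hC, htail, hsq, hε, hρ₀]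
    have hm' : m ≠ 0 := ne_of_gt hm
    have hρ' : ρ ≠ 0 := ne_of_gt hρpos
    field_simp
    ring
  refine ⟨?_, hform⟩
  intro ρ hρ
  rcases le_or_gt ρ (2 * ρ₀) with h | h
  · have hsplit : (∫ τ in (0 : ℝ)..ρ, k τ) + (∫ τ in ρ..(2 * ρ₀), k τ)
        = ∫ τ in (0 : ℝ)..(2 * ρ₀), k τ :=
      intervalIntegral.integral_add_adjacent_intervals (hintk ρ hρ)
        (hintpos _ _ hρ (by positivity))
    have htail : (∫ τ in ρ..(2 * ρ₀), k τ) ≤ 0 := by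
      have h0 := intervalIntegral.integral_nonneg (f := fun τ => -k τ) (μ := MeasureTheory.volume)
        h (fun x _ => neg_nonneg.2 (hnonpos x))
      rw [intervalIntegral.integral_neg] at h0
      linarith
    have hCpos : 0 < Real.sqrt ε + m / (4 * Real.sqrt ε * ρ₀) := by
      rw [hsq, hρ₀]; positivity
    rw [hu ρ hρ]
    linarith [hC, hsplit, htail, hCpos]
  · rw [hform ρ h.le, hsq]
    have : 0 < 1 + m / (2 * ε * ρ) := by positivity
    positivity
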